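/- Let n ≥ 6 and let X = X(m,Y) be the (n+2)×(n+2) complex matrix with block form [[0,A,Y],[0,0,B],[0,0,0]] (blocks of sizes 4, n−6, 4), where Y is an antisymmetric 4×4 matrix, A is the 4×(n−6) matrix whose first row is (m₁,…,m_{n−6}) and whose other rows are zero, and B is the (n−6)×4 matrix whose first column is (−m₁,…,−m_{n−6}) and whose other columns are zero. Then X³ = 0, X² = −(m₁²+⋯+m_{n−6}²)·E₍₁,ₙ₋₁₎ where E₍₁,ₙ₋₁₎ is the matrix unit with a single 1 in row 1 and column n−1 (1-indexed), exp(X) = I + X + (1/2)X², and for every v ∈ ℂ^{n+2} the last four coordinates of exp(X)·v equal the last four coordinates of v. -/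

import Mathlib

open NormedSpace

/-- The index type for `(n+2)×(n+2)` matrices in block form with blocks of sizes
`4`, `n − 6`, `4`. -/
abbrev Idx (n : ℕ) : Type := Fin 4 ⊕ (Fin (n - 6) ⊕ Fin 4)

/-- The matrix `X(m,Y)` with block form `[[0,A,Y],[0,0,B],[0,0,0]]`, where the first row
of `A` is `(m₁,…,m_{n−6})` and the other rows are zero, and the first column of `B` is
`(−m₁,…,−m_{n−6})` and the other columns are zero. -/
def Xmat (n : ℕ) (m : Fin (n - 6) → ℂ) (Y : Matrix (Fin 4) (Fin 4) ℂ) :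
    Matrix (Idx n) (Idx n) ℂ := fun i j =>
  match i, j with
  | .inl i, .inr (.inl j) => if (i : ℕ) = 0 then m j else 0
  | .inl i, .inr (.inr j) => Y i j
  | .inr (.inl i), .inr (.inr j) => if (j : ℕ) = 0 then -(m i) else 0
  | _, _ => 0

/-- The matrix unit `E₍₁,ₙ₋₁₎`: a single `1` in row 1 and column `n−1` (1-indexed), i.e.
in the first row of the first block and the first column of the last block. -/
def Ematrix (n : ℕ) : Matrix (Idx n) (Idx n) ℂ :=
  Matrix.single (Sum.inl 0) (Sum.inr (Sum.inr 0)) 1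

set_option linter.unnecessarySeqFocus false in
theorem sq_eq (n : ℕ) (m : Fin (n - 6) → ℂ) (Y : Matrix (Fin 4) (Fin 4) ℂ) :
    Xmat n m Y ^ 2 = (-(∑ i, m i ^ 2)) • Ematrix n := by
  ext i j
  rw [pow_two, Matrix.mul_apply]
  rw [Fintype.sum_sum_type, Fintype.sum_sum_type]
  rcases i with i | i | i <;> rcases j with j | j | j <;>
    simp [Xmat, Ematrix, Matrix.single, mul_ite, ite_and, apply_ite,
      Finset.sum_ite_eq', pow_two, Sum.inl.injEq, Sum.inr.injEq, Fin.ext_iff,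
      Finset.mul_sum, Finset.sum_mul, eq_comm, -Fin.val_eq_zero_iff] <;>
    split_ifs <;> simp_all

theorem EX_eq (n : ℕ) (m : Fin (n - 6) → ℂ) (Y : Matrix (Fin 4) (Fin 4) ℂ) :
    Ematrix n * Xmat n m Y = 0 := by
  ext i j
  rw [Matrix.mul_apply, Fintype.sum_sum_type, Fintype.sum_sum_type]
  rcases j with j | j | j <;>
    simp [Xmat, Ematrix, Matrix.single, ite_mul, apply_ite]

theorem cube_eq (n : ℕ) (m : Fin (n - 6) → ℂ) (Y : Matrix (Fin 4) (Fin 4) ℂ) :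
    Xmat n m Y ^ 3 = 0 := by
  rw [pow_succ, sq_eq, Matrix.smul_mul, EX_eq, smul_zero]

theorem exp_eq' (n : ℕ) (m : Fin (n - 6) → ℂ) (Y : Matrix (Fin 4) (Fin 4) ℂ) :
    exp (Xmat n m Y) = 1 + Xmat n m Y + ((1 : ℂ) / 2) • Xmat n m Y ^ 2 := by
  rw [exp_eq_tsum (𝕂 := ℂ)]
  simp only []
  show (∑' k : ℕ, (k.factorial : ℂ)⁻¹ • Xmat n m Y ^ k) = _
  rw [tsum_eq_sum (s := Finset.range 3) (f := fun k => (k.factorial : ℂ)⁻¹ • Xmat n m Y ^ k)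
    (by
      intro b hb
      simp only [Finset.mem_range, not_lt] at hb
      have : Xmat n m Y ^ b = 0 := by
        calc Xmat n m Y ^ b = Xmat n m Y ^ 3 * Xmat n m Y ^ (b - 3) := by
              rw [← pow_add]; congr 1; omega
          _ = 0 := by rw [cube_eq]; simp
      rw [this, smul_zero])]
  simp [Finset.sum_range_succ, Nat.factorial]

theorem last_eq (n : ℕ) (m : Fin (n - 6) → ℂ) (Y : Matrix (Fin 4) (Fin 4) ℂ)
    (v : Idx n → ℂ) (j : Fin 4) :
    (exp (Xmat n m Y)).mulVec v (Sum.inr (Sum.inr j)) = v (Sum.inr (Sum.inr j)) := by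
  rw [exp_eq', sq_eq]
  simp only [Matrix.add_mulVec, Matrix.one_mulVec, Matrix.smul_mulVec, Pi.add_apply,
    Pi.smul_apply]
  simp [Matrix.mulVec, dotProduct, Fintype.sum_sum_type, Xmat, Ematrix,
    Matrix.single]


/-- For `n ≥ 6` and `Y` antisymmetric: `X³ = 0`, `X² = −(Σ mᵢ²)·E₍₁,ₙ₋₁₎`,
`exp X = I + X + ½X²`, and `exp X · v` has the same last four coordinates as `v`. -/
theorem stmt18 (n : ℕ) (hn : 6 ≤ n) (m : Fin (n - 6) → ℂ)
    (Y : Matrix (Fin 4) (Fin 4) ℂ) (hY : Y.transpose = -Y) :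
    Xmat n m Y ^ 3 = 0 ∧
    Xmat n m Y ^ 2 = (-(∑ i, m i ^ 2)) • Ematrix n ∧
    exp (Xmat n m Y) = 1 + Xmat n m Y + ((1 : ℂ) / 2) • Xmat n m Y ^ 2 ∧
    ∀ (v : Idx n → ℂ) (j : Fin 4),
      (exp (Xmat n m Y)).mulVec v (Sum.inr (Sum.inr j)) = v (Sum.inr (Sum.inr j)) := by
  exact ⟨cube_eq n m Y, sq_eq n m Y, exp_eq' n m Y, fun v j => last_eq n m Y v j⟩
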